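/- The number of noncrossing set partitions of {1,...,n} equals the Catalan number Cat(n) = (1/(n+1))·binom(2n,n). -/

import Mathlib

open Finset

/-- A set partition of `[n]` is noncrossing if whenever `a < b < c < d` with `a,c` in a
block `B` and `b,d` in a block `C`, then `B = C`. -/
def Noncrossing {n : ℕ} (π : Finpartition (Finset.univ : Finset (Fin n))) : Prop :=
  ∀ B ∈ π.parts, ∀ C ∈ π.parts, ∀ a b c d : Fin n,
    a < b → b < c → c < d → a ∈ B → c ∈ B → b ∈ C → d ∈ C → B = C

/-! ### Setoid version of the noncrossing condition -/

def NCRel {n : ℕ} (s : Setoid (Fin n)) : Prop :=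
  ∀ a b c d : Fin n, a < b → b < c → c < d → s.r a c → s.r b d → s.r a b

lemma rel_refl {m : ℕ} (s : Setoid (Fin m)) (a : Fin m) : s.r a a := s.iseqv.refl a
lemma rel_symm {m : ℕ} (s : Setoid (Fin m)) {a b : Fin m} (h : s.r a b) : s.r b a :=
  s.iseqv.symm h
lemma rel_trans {m : ℕ} (s : Setoid (Fin m)) {a b c : Fin m} (h : s.r a b) (h' : s.r b c) :
    s.r a c := s.iseqv.trans h h'

lemma fin_rel_of_eq {m : ℕ} (s : Setoid (Fin m)) {x y : Fin m} (h : x.val = y.val) :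
    s.r x y := by
  have hxy : x = y := Fin.ext h
  exact hxy ▸ rel_refl s x

lemma fin_rel_congr {m : ℕ} (s : Setoid (Fin m)) {x x' y y' : Fin m}
    (hx : x.val = x'.val) (hy : y.val = y'.val) : s.r x y ↔ s.r x' y' := by
  rw [show x = x' from Fin.ext hx, show y = y' from Fin.ext hy]

/-! ### Gluing two small noncrossing setoids into a big one -/

def glueFun {n i : ℕ} (s₁ : Setoid (Fin i)) (s₂ : Setoid (Fin (n - i))) (hi : i ≤ n)
    (a : Fin (n + 1)) : Quotient s₁ ⊕ (Quotient s₂ ⊕ Unit) :=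
  if h1 : 1 ≤ a.val ∧ a.val ≤ i then
    Sum.inl (Quotient.mk s₁ ⟨a.val - 1, by omega⟩)
  else if h2 : i + 1 ≤ a.val then
    Sum.inr (Sum.inl (Quotient.mk s₂ ⟨a.val - i - 1, by have := a.isLt; omega⟩))
  else if h3 : i < n then
    Sum.inr (Sum.inl (Quotient.mk s₂ ⟨0, by omega⟩))
  else Sum.inr (Sum.inr ())

section GlueLemmas

variable {n i : ℕ} {s₁ : Setoid (Fin i)} {s₂ : Setoid (Fin (n - i))} {hi : i ≤ n}
  {a b : Fin (n + 1)}

lemma glueFun_m (ha : 1 ≤ a.val) (ha' : a.val ≤ i) :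
    glueFun s₁ s₂ hi a = Sum.inl (Quotient.mk s₁ ⟨a.val - 1, by omega⟩) := by
  simp only [glueFun]
  rw [dif_pos ⟨ha, ha'⟩]

lemma glueFun_h (ha : i + 1 ≤ a.val) :
    glueFun s₁ s₂ hi a
      = Sum.inr (Sum.inl (Quotient.mk s₂ ⟨a.val - i - 1, by have := a.isLt; omega⟩)) := by
  simp only [glueFun]
  rw [dif_neg (by omega), dif_pos ha]

lemma glueFun_z (ha : a.val = 0) (hin : i < n) :
    glueFun s₁ s₂ hi a = Sum.inr (Sum.inl (Quotient.mk s₂ ⟨0, by omega⟩)) := by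
  simp only [glueFun]
  rw [dif_neg (by omega), dif_neg (by omega), dif_pos hin]

lemma glueFun_z' (ha : a.val = 0) (hin : ¬ i < n) :
    glueFun s₁ s₂ hi a = Sum.inr (Sum.inr ()) := by
  simp only [glueFun]
  rw [dif_neg (by omega), dif_neg (by omega), dif_neg hin]

lemma glue_mm (ha : 1 ≤ a.val) (ha' : a.val ≤ i) (hb : 1 ≤ b.val) (hb' : b.val ≤ i) :
    (Setoid.ker (glueFun s₁ s₂ hi)).r a b ↔
      s₁.r ⟨a.val - 1, by omega⟩ ⟨b.val - 1, by omega⟩ := by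
  show glueFun s₁ s₂ hi a = glueFun s₁ s₂ hi b ↔ _
  rw [glueFun_m ha ha', glueFun_m hb hb']
  simp only [Sum.inl.injEq]
  exact ⟨fun h => Quotient.exact h, fun h => Quotient.sound h⟩

lemma glue_hh (ha : i + 1 ≤ a.val) (hb : i + 1 ≤ b.val) :
    (Setoid.ker (glueFun s₁ s₂ hi)).r a b ↔
      s₂.r ⟨a.val - i - 1, by have := a.isLt; omega⟩
        ⟨b.val - i - 1, by have := b.isLt; omega⟩ := by
  show glueFun s₁ s₂ hi a = glueFun s₁ s₂ hi b ↔ _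
  rw [glueFun_h ha, glueFun_h hb]
  simp only [Sum.inr.injEq, Sum.inl.injEq]
  exact ⟨fun h => Quotient.exact h, fun h => Quotient.sound h⟩

lemma glue_zh (ha : a.val = 0) (hb : i + 1 ≤ b.val) :
    (Setoid.ker (glueFun s₁ s₂ hi)).r a b ↔
      s₂.r ⟨0, by have := b.isLt; omega⟩ ⟨b.val - i - 1, by have := b.isLt; omega⟩ := by
  have hin : i < n := by have := b.isLt; omega
  show glueFun s₁ s₂ hi a = glueFun s₁ s₂ hi b ↔ _
  rw [glueFun_z ha hin, glueFun_h hb]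
  simp only [Sum.inr.injEq, Sum.inl.injEq]
  exact ⟨fun h => Quotient.exact h, fun h => Quotient.sound h⟩

lemma glue_not_mh (ha : 1 ≤ a.val) (ha' : a.val ≤ i) (hb : i + 1 ≤ b.val) :
    ¬ (Setoid.ker (glueFun s₁ s₂ hi)).r a b := by
  show glueFun s₁ s₂ hi a ≠ glueFun s₁ s₂ hi b
  rw [glueFun_m ha ha', glueFun_h hb]
  simp

lemma glue_not_zm (ha : a.val = 0) (hb : 1 ≤ b.val) (hb' : b.val ≤ i) :
    ¬ (Setoid.ker (glueFun s₁ s₂ hi)).r a b := by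
  show glueFun s₁ s₂ hi a ≠ glueFun s₁ s₂ hi b
  rw [glueFun_m hb hb']
  by_cases hin : i < n
  · rw [glueFun_z ha hin]; simp
  · rw [glueFun_z' ha hin]; simp

lemma NCRel_glue (h₁ : NCRel s₁) (h₂ : NCRel s₂) :
    NCRel (Setoid.ker (glueFun s₁ s₂ hi)) := by
  intro a b c d hab hbc hcd rac rbd
  have hab' : a.val < b.val := hab
  have hbc' : b.val < c.val := hbc
  have hcd' : c.val < d.val := hcd
  have hA := a.isLt; have hB := b.isLt; have hC := c.isLt; have hD := d.isLt
  by_cases haz : a.val = 0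
  · by_cases hcm : c.val ≤ i
    · exact absurd rac (glue_not_zm haz (by omega) hcm)
    · have hc' : i + 1 ≤ c.val := by omega
      have rac' := (glue_zh haz hc').1 rac
      by_cases hbm : b.val ≤ i
      · exact absurd rbd (glue_not_mh (by omega) hbm (by omega))
      · have hb' : i + 1 ≤ b.val := by omega
        have rbd' := (glue_hh hb' (by omega)).1 rbd
        rw [glue_zh haz hb']
        by_cases hbj : b.val = i + 1
        · exact fin_rel_of_eq _ (by simp; omega)
        · exact h₂ _ _ _ _ (by simp [Fin.lt_def]; omega) (by simp [Fin.lt_def]; omega)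
            (by simp [Fin.lt_def]; omega) rac' rbd'
  · by_cases ham : a.val ≤ i
    · by_cases hcm : c.val ≤ i
      · by_cases hdm : d.val ≤ i
        · have rac' := (glue_mm (by omega) ham (by omega) hcm).1 rac
          have rbd' := (glue_mm (by omega) (by omega) (by omega) hdm).1 rbd
          rw [glue_mm (by omega) ham (by omega) (by omega)]
          exact h₁ _ _ _ _ (by simp [Fin.lt_def]; omega) (by simp [Fin.lt_def]; omega)
            (by simp [Fin.lt_def]; omega) rac' rbd'
        · exact absurd rbd (glue_not_mh (by omega) (by omega) (by omega))
      · exact absurd rac (glue_not_mh (by omega) ham (by omega))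
    · have ha' : i + 1 ≤ a.val := by omega
      have rac' := (glue_hh ha' (by omega)).1 rac
      have rbd' := (glue_hh (by omega) (by omega)).1 rbd
      rw [glue_hh ha' (by omega)]
      exact h₂ _ _ _ _ (by simp [Fin.lt_def]; omega) (by simp [Fin.lt_def]; omega)
        (by simp [Fin.lt_def]; omega) rac' rbd'

end GlueLemmas

/-! ### The bijection -/

def NCS (m : ℕ) := {s : Setoid (Fin m) // NCRel s}

def glueMap (n : ℕ) (p : Σ i : Fin (n + 1), NCS i.val × NCS (n - i.val)) : NCS (n + 1) :=
  ⟨Setoid.ker (glueFun p.2.1.1 p.2.2.1 p.1.is_le), NCRel_glue p.2.1.2 p.2.2.2⟩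

lemma glue_ne_of_lt {n i i' : ℕ} (hii : i < i') (hi : i ≤ n) (hi' : i' ≤ n)
    (s₁ : Setoid (Fin i)) (s₂ : Setoid (Fin (n - i)))
    (s₁' : Setoid (Fin i')) (s₂' : Setoid (Fin (n - i')))
    (h : Setoid.ker (glueFun s₁ s₂ hi) = Setoid.ker (glueFun s₁' s₂' hi')) : False := by
  set a0 : Fin (n + 1) := ⟨0, by omega⟩ with ha0
  set b0 : Fin (n + 1) := ⟨i + 1, by omega⟩ with hb0
  have hb0v : b0.val = i + 1 := rfl
  have r1 : (Setoid.ker (glueFun s₁ s₂ hi)).r a0 b0 :=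
    (glue_zh rfl (by omega)).2 (fin_rel_of_eq _ (by simp [hb0v]))
  rw [h] at r1
  exact glue_not_zm rfl (by omega) (by omega) r1

lemma glueMap_inj (n : ℕ) : Function.Injective (glueMap n) := by
  rintro ⟨i, ⟨s₁, hs₁⟩, ⟨s₂, hs₂⟩⟩ ⟨i', ⟨s₁', hs₁'⟩, ⟨s₂', hs₂'⟩⟩ h
  have h' : Setoid.ker (glueFun s₁ s₂ i.is_le) = Setoid.ker (glueFun s₁' s₂' i'.is_le) :=
    congrArg Subtype.val h
  have hii : i = i' := by
    rcases lt_trichotomy i.val i'.val with hlt | he | hgt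
    · exact (glue_ne_of_lt hlt i.is_le i'.is_le _ _ _ _ h').elim
    · exact Fin.ext he
    · exact (glue_ne_of_lt hgt i'.is_le i.is_le _ _ _ _ h'.symm).elim
  subst hii
  obtain rfl : s₁ = s₁' := by
    apply Setoid.ext
    intro x y
    have hx := x.isLt; have hy := y.isLt
    have e1 := glue_mm (s₁ := s₁) (s₂ := s₂) (hi := i.is_le)
      (a := ⟨x.val + 1, by omega⟩) (b := ⟨y.val + 1, by omega⟩)
      (by simp) (by simp <;> omega) (by simp) (by simp <;> omega)
    have e2 := glue_mm (s₁ := s₁') (s₂ := s₂') (hi := i.is_le)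
      (a := ⟨x.val + 1, by omega⟩) (b := ⟨y.val + 1, by omega⟩)
      (by simp) (by simp <;> omega) (by simp) (by simp <;> omega)
    rw [fin_rel_congr s₁ (x' := x) (y' := y) (by simp) (by simp)] at e1
    rw [fin_rel_congr s₁' (x' := x) (y' := y) (by simp) (by simp)] at e2
    rw [← e1, ← e2, h']
  obtain rfl : s₂ = s₂' := by
    apply Setoid.ext
    intro x y
    have hx := x.isLt; have hy := y.isLt
    have e1 := glue_hh (s₁ := s₁) (s₂ := s₂) (hi := i.is_le)
      (a := ⟨x.val + i.val + 1, by omega⟩) (b := ⟨y.val + i.val + 1, by omega⟩)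
      (by simp <;> omega) (by simp <;> omega)
    have e2 := glue_hh (s₁ := s₁) (s₂ := s₂') (hi := i.is_le)
      (a := ⟨x.val + i.val + 1, by omega⟩) (b := ⟨y.val + i.val + 1, by omega⟩)
      (by simp <;> omega) (by simp <;> omega)
    rw [fin_rel_congr s₂ (x' := x) (y' := y) (by simp <;> omega) (by simp <;> omega)] at e1
    rw [fin_rel_congr s₂' (x' := x) (y' := y) (by simp <;> omega) (by simp <;> omega)] at e2
    rw [← e1, ← e2, h']
  rfl

lemma setoid_ext_of_le {m : ℕ} (s t : Setoid (Fin m))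
    (H : ∀ a b : Fin m, a.val ≤ b.val → (s.r a b ↔ t.r a b)) : s = t := by
  apply Setoid.ext
  intro a b
  rcases le_total a.val b.val with h | h
  · exact H a b h
  · exact ⟨fun hr => rel_symm t ((H b a h).1 (rel_symm s hr)),
      fun hr => rel_symm s ((H b a h).2 (rel_symm t hr))⟩

lemma glueMap_surj (n : ℕ) : Function.Surjective (glueMap n) := by
  classical
  rintro ⟨s, hs⟩
  set T := univ.filter (fun k : Fin (n + 1) => 0 < k.val ∧ s.r 0 k) with hTdef
  set jv := if hT : T.Nonempty then (T.min' hT).val else n + 1 with hjv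
  have hjb : 1 ≤ jv ∧ jv ≤ n + 1 := by
    rw [hjv]
    split
    · rename_i hT
      have := (mem_filter.1 (T.min'_mem hT)).2.1
      have := (T.min' hT).isLt
      omega
    · omega
  have h1 : ∀ k : Fin (n + 1), 0 < k.val → k.val < jv → ¬ s.r 0 k := by
    intro k hk hkj hr
    have hkT : k ∈ T := by rw [hTdef, mem_filter]; exact ⟨mem_univ _, hk, hr⟩
    have hT : T.Nonempty := ⟨k, hkT⟩
    have hle : (T.min' hT).val ≤ k.val := T.min'_le k hkT
    rw [hjv, dif_pos hT] at hkj
    omega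
  have h2 : ∀ k : Fin (n + 1), k.val = jv → s.r 0 k := by
    intro k hk
    by_cases hT : T.Nonempty
    · rw [hjv, dif_pos hT] at hk
      have : k = T.min' hT := Fin.ext hk
      rw [this]
      exact (mem_filter.1 (T.min'_mem hT)).2.2
    · rw [hjv, dif_neg hT] at hk
      exact absurd hk (by have := k.isLt; omega)
  have h4 : ∀ a b : Fin (n + 1), 0 < a.val → a.val < jv → jv ≤ b.val → ¬ s.r a b := by
    intro a b ha haj hjb' hr
    by_cases hbj : b.val = jv
    · exact h1 a ha haj (rel_trans s (h2 b hbj) (rel_symm s hr))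
    · have hjn : jv < n + 1 := by have := b.isLt; omega
      have hj : s.r 0 ⟨jv, hjn⟩ := h2 _ rfl
      have := hs 0 a ⟨jv, hjn⟩ b
        (by simp only [Fin.lt_def, Fin.val_zero, Fin.val_mk] <;> omega)
        (by simp only [Fin.lt_def, Fin.val_zero, Fin.val_mk] <;> omega)
        (by simp only [Fin.lt_def, Fin.val_zero, Fin.val_mk] <;> omega) hj hr
      exact h1 a ha haj this
  set iv := jv - 1 with hiv
  have hivn : iv ≤ n := by omega
  refine ⟨⟨⟨iv, by omega⟩,
    ⟨Setoid.comap (fun x : Fin iv => (⟨x.val + 1, by have := x.isLt; omega⟩ : Fin (n + 1))) s,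
      ?_⟩,
    ⟨Setoid.comap (fun x : Fin (n - iv) =>
        (⟨x.val + iv + 1, by have := x.isLt; omega⟩ : Fin (n + 1))) s, ?_⟩⟩, ?_⟩
  · intro x y z w hxy hyz hzw rxz ryw
    have e1 : x.val < y.val := hxy
    have e2 : y.val < z.val := hyz
    have e3 : z.val < w.val := hzw
    exact hs _ _ _ _ (by simp only [Fin.mk_lt_mk] <;> omega)
      (by simp only [Fin.mk_lt_mk] <;> omega) (by simp only [Fin.mk_lt_mk] <;> omega) rxz ryw
  · intro x y z w hxy hyz hzw rxz ryw
    have e1 : x.val < y.val := hxy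
    have e2 : y.val < z.val := hyz
    have e3 : z.val < w.val := hzw
    exact hs _ _ _ _ (by simp only [Fin.mk_lt_mk] <;> omega)
      (by simp only [Fin.mk_lt_mk] <;> omega) (by simp only [Fin.mk_lt_mk] <;> omega) rxz ryw
  · refine Subtype.ext (setoid_ext_of_le _ _ ?_)
    intro a b hab
    show (Setoid.ker (glueFun (n := n) (i := iv)
      (Setoid.comap (fun x : Fin iv => (⟨x.val + 1, by have := x.isLt; omega⟩ : Fin (n + 1))) s)
      (Setoid.comap (fun x : Fin (n - iv) =>
        (⟨x.val + iv + 1, by have := x.isLt; omega⟩ : Fin (n + 1))) s)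
      hivn)).r a b ↔ s.r a b
    have hA := a.isLt; have hB := b.isLt
    by_cases haz : a.val = 0
    · have ha0 : a = 0 := Fin.ext (by simp [haz])
      by_cases hbz : b.val = 0
      · rw [show a = b from Fin.ext (by omega)]
        exact iff_of_true (rel_refl _ b) (rel_refl s b)
      · by_cases hbm : b.val ≤ iv
        · exact iff_of_false (glue_not_zm haz (by omega) hbm)
            (fun hr => h1 b (by omega) (by omega) (ha0 ▸ hr))
        · rw [glue_zh haz (by omega)]
          show s.r _ _ ↔ _
          rw [fin_rel_congr s (x' := ⟨jv, by omega⟩) (y' := b) (by simp <;> omega)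
            (by simp <;> omega), ha0]
          exact ⟨fun hr => rel_trans s (h2 _ rfl) hr,
            fun hr => rel_trans s (rel_symm s (h2 _ rfl)) hr⟩
    · by_cases ham : a.val ≤ iv
      · by_cases hbm : b.val ≤ iv
        · rw [glue_mm (by omega) ham (by omega) hbm]
          show s.r _ _ ↔ _
          exact fin_rel_congr s (by simp <;> omega) (by simp <;> omega)
        · refine iff_of_false (glue_not_mh (by omega) ham (by omega))
            (h4 a b (by omega) (by omega) (by omega))
      · rw [glue_hh (by omega) (by omega)]
        show s.r _ _ ↔ _
        exact fin_rel_congr s (by simp <;> omega) (by simp <;> omega)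

/-! ### Counting -/

lemma setoid_finite (m : ℕ) : Finite (Setoid (Fin m)) := by
  have hinj : Function.Injective (fun s : Setoid (Fin m) => s.r) := by
    intro s t h
    exact Setoid.ext fun a b => iff_of_eq (congrFun (congrFun h a) b)
  exact Finite.of_injective _ hinj

lemma ncs_card (m : ℕ) : Nat.card (NCS m) = catalan m := by
  induction m using Nat.strong_induction_on with
  | _ m ih =>
    match m with
    | 0 =>
      rw [catalan_zero]
      haveI : Unique (NCS 0) :=
        { default := ⟨⟨Eq, eq_equivalence⟩, fun a => a.elim0⟩
          uniq := fun x => Subtype.ext (Setoid.ext fun a => a.elim0) }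
      exact Nat.card_unique
    | (k + 1) =>
      haveI : ∀ l, Finite (NCS l) := fun l => @Subtype.finite _ (setoid_finite l) _
      letI : ∀ l, Fintype (NCS l) := fun l => Fintype.ofFinite _
      rw [catalan_succ, ← Nat.card_eq_of_bijective (glueMap k) ⟨glueMap_inj k, glueMap_surj k⟩,
        Nat.card_eq_fintype_card, Fintype.card_sigma]
      apply Finset.sum_congr rfl
      intro x _
      rw [Fintype.card_prod, ← Nat.card_eq_fintype_card, ← Nat.card_eq_fintype_card,
        ih x.val x.isLt, ih (k - x.val) (by omega)]

/-! ### From partitions to setoids -/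

section Translate

open scoped Classical

variable {m : ℕ}

def toSetoid (π : Finpartition (univ : Finset (Fin m))) : Setoid (Fin m) where
  r a b := b ∈ π.part a
  iseqv := by
    refine ⟨fun a => π.mem_part (mem_univ a), fun {a b} h => ?_, fun {a b c} h1 h2 => ?_⟩
    · have := (π.mem_part_iff_part_eq_part (mem_univ b) (mem_univ a)).1 h
      exact (π.mem_part_iff_part_eq_part (mem_univ a) (mem_univ b)).2 this.symm
    · have e1 := (π.mem_part_iff_part_eq_part (mem_univ b) (mem_univ a)).1 h1
      have e2 := (π.mem_part_iff_part_eq_part (mem_univ c) (mem_univ b)).1 h2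
      exact (π.mem_part_iff_part_eq_part (mem_univ c) (mem_univ a)).2 (e2.trans e1)

lemma finpartition_ext_part {P Q : Finpartition (univ : Finset (Fin m))}
    (h : ∀ a, P.part a = Q.part a) : P = Q := by
  ext B
  constructor
  · intro hB
    obtain ⟨x, hx⟩ := P.nonempty_of_mem_parts hB
    have : P.part x = B := P.part_eq_of_mem hB hx
    rw [← this, h]
    exact Q.part_mem.2 (mem_univ x)
  · intro hB
    obtain ⟨x, hx⟩ := Q.nonempty_of_mem_parts hB
    have : Q.part x = B := Q.part_eq_of_mem hB hx
    rw [← this, ← h]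
    exact P.part_mem.2 (mem_univ x)

noncomputable def partitionSetoidEquiv :
    Finpartition (univ : Finset (Fin m)) ≃ Setoid (Fin m) where
  toFun := toSetoid
  invFun s := Finpartition.ofSetoid s
  left_inv π := by
    apply finpartition_ext_part
    intro a
    ext b
    rw [Finpartition.mem_part_ofSetoid_iff_rel]
    rfl
  right_inv s := Setoid.ext fun a b => Finpartition.mem_part_ofSetoid_iff_rel

lemma noncrossing_iff (π : Finpartition (univ : Finset (Fin m))) :
    Noncrossing π ↔ NCRel (toSetoid π) := by
  constructor
  · intro h a b c d hab hbc hcd rac rbd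
    have := h (π.part a) (π.part_mem.2 (mem_univ a)) (π.part b) (π.part_mem.2 (mem_univ b))
      a b c d hab hbc hcd (π.mem_part (mem_univ a)) rac (π.mem_part (mem_univ b)) rbd
    show b ∈ π.part a
    rw [this]
    exact π.mem_part (mem_univ b)
  · intro h B hB C hC a b c d hab hbc hcd haB hcB hbC hdC
    have hBpa : π.part a = B := π.part_eq_of_mem hB haB
    have hCpb : π.part b = C := π.part_eq_of_mem hC hbC
    have r1 : (toSetoid π).r a c := by show c ∈ π.part a; rw [hBpa]; exact hcB
    have r2 : (toSetoid π).r b d := by show d ∈ π.part b; rw [hCpb]; exact hdC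
    have := h a b c d hab hbc hcd r1 r2
    exact π.eq_of_mem_parts hB hC (hBpa ▸ this) hbC

end Translate

/-- The number of noncrossing set partitions of `[n]` equals the Catalan number
`Cat(n) = (1/(n+1))·binom(2n,n)` (stated in the cleared-denominator form). -/
theorem noncrossing_card_eq_catalan (n : ℕ) :
    (n + 1) * Nat.card {π : Finpartition (Finset.univ : Finset (Fin n)) // Noncrossing π}
      = (2 * n).choose n := by
  have hcard : Nat.card {π : Finpartition (Finset.univ : Finset (Fin n)) // Noncrossing π}
      = Nat.card (NCS n) :=
    Nat.card_congr (Equiv.subtypeEquiv partitionSetoidEquiv fun π => by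
      rw [noncrossing_iff]; rfl)
  rw [hcard, ncs_card, succ_mul_catalan_eq_centralBinom]
  rfl
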